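/- Let (E_C, J_C, M_C) and (E_D, J_D, M_D) be double factorization systems on bicomplete categories C and D respectively, and let T = (T, η, μ) and H = (H, ζ, ν) be monads on C and D whose underlying functors preserve all small colimits, trivial cofibrations (T(E_C) ⊆ E_C, H(E_D) ⊆ E_D) and bifibrant morphisms (T(J_C) ⊆ J_C, H(J_D) ⊆ J_D). Suppose L ⊣ R with L : C → D is a Quillen adjunction and Q : C^T ← D^H is a functor satisfying R ∘ V^H = V^T ∘ Q, where V^T, V^H denote the forgetful functors. Then Q admits a left adjoint P, and P ⊣ Q is a Quillen adjunction with respect to the right-induced dfs's on C^T and D^H. -/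

import Mathlib

open CategoryTheory CategoryTheory.Limits

universe v u v₂ u₂

namespace DFS

variable {C : Type u} [Category.{v} C]

/-- `f` is (left) orthogonal to `g`: every commutative square from `f` to `g`
admits a unique diagonal filler. -/
def Orth {A B X Y : C} (f : A ⟶ B) (g : X ⟶ Y) : Prop :=
  ∀ (u : A ⟶ X) (v : B ⟶ Y), u ≫ g = f ≫ v → ∃! h : B ⟶ X, f ≫ h = u ∧ h ≫ g = v

/-- Mutual orthogonality of two classes of morphisms. -/
def ClassOrth (L R : MorphismProperty C) : Prop :=
  ∀ ⦃A B X Y : C⦄ (f : A ⟶ B) (g : X ⟶ Y), L f → R g → Orth f g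

/-- The class `R·L` of composites `e ≫ m` with `e ∈ L` and `m ∈ R`. -/
def Comp (R L : MorphismProperty C) : MorphismProperty C :=
  fun X Y f => ∃ (Z : C) (e : X ⟶ Z) (m : Z ⟶ Y), L e ∧ R m ∧ e ≫ m = f

/-- An object `X` is `L`-local if precomposition with every member of `L` is a
bijection of hom-sets into `X`. -/
def IsLocal (L : MorphismProperty C) (X : C) : Prop :=
  ∀ ⦃A B : C⦄ (m : A ⟶ B), L m → Function.Bijective (fun g : B ⟶ X => m ≫ g)

/-- An object `X` is `L`-separating if precomposition with every member of `L` is an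
injection of hom-sets into `X`. -/
def IsSeparating (L : MorphismProperty C) (X : C) : Prop :=
  ∀ ⦃A B : C⦄ (m : A ⟶ B), L m → Function.Injective (fun g : B ⟶ X => m ≫ g)

/-- A double (orthogonal) factorization system. -/
structure IsDFS (E J M : MorphismProperty C) : Prop where
  postcomp_iso_E : ∀ ⦃A B B' : C⦄ (e : A ⟶ B) (i : B ⟶ B'), IsIso i → E e → E (e ≫ i)
  comp_iso_J : ∀ ⦃A' A B B' : C⦄ (i : A' ⟶ A) (j : A ⟶ B) (i' : B ⟶ B'),
      IsIso i → IsIso i' → J j → J (i ≫ j ≫ i')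
  precomp_iso_M : ∀ ⦃A' A B : C⦄ (i : A' ⟶ A) (m : A ⟶ B), IsIso i → M m → M (i ≫ m)
  fac : ∀ ⦃X Y : C⦄ (f : X ⟶ Y), ∃ (A B : C) (e : X ⟶ A) (j : A ⟶ B) (m : B ⟶ Y),
      E e ∧ J j ∧ M m ∧ e ≫ j ≫ m = f
  lift : ∀ ⦃A B B'' D D' F' : C⦄ (e : A ⟶ B) (j : B ⟶ B'') (j' : D ⟶ D') (m : D' ⟶ F')
      (u : A ⟶ D) (v : B'' ⟶ F'), E e → J j → J j' → M m →
      e ≫ j ≫ v = u ≫ j' ≫ m →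
      ∃! st : (B ⟶ D) × (B'' ⟶ D'),
        e ≫ st.1 = u ∧ st.1 ≫ j' = j ≫ st.2 ∧ st.2 ≫ m = v

/-- An (orthogonal) factorization system. -/
structure IsFS (L R : MorphismProperty C) : Prop where
  fac : ∀ ⦃X Y : C⦄ (f : X ⟶ Y), ∃ (Z : C) (e : X ⟶ Z) (m : Z ⟶ Y), L e ∧ R m ∧ e ≫ m = f
  left_iff : ∀ ⦃A B : C⦄ (f : A ⟶ B), L f ↔ ∀ ⦃X Y : C⦄ (g : X ⟶ Y), R g → Orth f g
  right_iff : ∀ ⦃X Y : C⦄ (g : X ⟶ Y), R g ↔ ∀ ⦃A B : C⦄ (f : A ⟶ B), L f → Orth f g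

/-- Stability of a class of morphisms under pullback. -/
def StableUnderPB (P : MorphismProperty C) : Prop :=
  ∀ ⦃A B A' B' : C⦄ (f : A ⟶ B) (g : B' ⟶ B) (f' : A' ⟶ B') (h : A' ⟶ A),
    IsPullback h f' f g → P f → P f'

/-- A left Quillen functor between categories equipped with dfs's: it maps
trivial cofibrations to trivial cofibrations and cofibrations to cofibrations. -/
def LeftQuillen {D : Type u₂} [Category.{v₂} D]
    (EC JC : MorphismProperty C) (ED JD : MorphismProperty D) (F : C ⥤ D) : Prop :=
  (∀ ⦃A B : C⦄ (f : A ⟶ B), EC f → ED (F.map f)) ∧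
  (∀ ⦃A B : C⦄ (f : A ⟶ B), Comp JC EC f → Comp JD ED (F.map f))

end DFS

namespace DFS

/-- The preimage of a class of morphisms under the forgetful functor from
Eilenberg–Moore algebras. -/
def algPre {C : Type u} [Category.{v} C] (T : Monad C) (P : MorphismProperty C) :
    MorphismProperty T.Algebra :=
  fun _ _ f => P f.f

end DFS

/-! ### Auxiliary lemmas -/

namespace DFS

section OrthLemmas

variable {C : Type u} [Category.{v} C]

theorem Orth.postcomp {A B X Y Z : C} {f : A ⟶ B} {g : X ⟶ Y} (hO : Orth f g)
    (i : Y ⟶ Z) (hi : IsIso i) : Orth f (g ≫ i) := by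
  intro u v huv
  have huv' : u ≫ g = f ≫ v ≫ inv i := by
    rw [← cancel_mono i]
    simp only [Category.assoc, IsIso.inv_hom_id, Category.comp_id]
    exact huv
  obtain ⟨d, ⟨hd1, hd2⟩, hu⟩ := hO u (v ≫ inv i) huv'
  refine ⟨d, ⟨hd1, ?_⟩, ?_⟩
  · rw [← Category.assoc, hd2, Category.assoc, IsIso.inv_hom_id, Category.comp_id]
  · rintro d' ⟨h1, h2⟩
    exact hu d' ⟨h1, by
      rw [← h2]
      simp only [Category.assoc, IsIso.hom_inv_id, Category.comp_id]⟩

theorem Orth.precomp {A B W X Y : C} {f : A ⟶ B} {g : X ⟶ Y} (hO : Orth f g)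
    (i : W ⟶ X) (hi : IsIso i) : Orth f (i ≫ g) := by
  intro u v huv
  have huv' : (u ≫ i) ≫ g = f ≫ v := by rw [Category.assoc]; exact huv
  obtain ⟨d, ⟨hd1, hd2⟩, hu⟩ := hO (u ≫ i) v huv'
  refine ⟨d ≫ inv i, ⟨?_, ?_⟩, ?_⟩
  · rw [← Category.assoc, hd1, Category.assoc, IsIso.hom_inv_id, Category.comp_id]
  · rw [Category.assoc, IsIso.inv_hom_id_assoc]; exact hd2
  · rintro d' ⟨h1, h2⟩
    have : d' ≫ i = d := hu _ ⟨by rw [← Category.assoc, h1], by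
      rw [Category.assoc]; exact h2⟩
    rw [← this, Category.assoc, IsIso.hom_inv_id, Category.comp_id]

/-- Transposing orthogonality along an adjunction, one direction. -/
theorem orth_adj_left {D : Type u₂} [Category.{v₂} D] {F : C ⥤ D} {G : D ⥤ C}
    (adj : F ⊣ G) {A B : C} {X Y : D} (f : A ⟶ B) (g : X ⟶ Y)
    (hO : Orth f (G.map g)) : Orth (F.map f) g := by
  intro u v huv
  have huv' : (adj.homEquiv _ _ u) ≫ G.map g = f ≫ (adj.homEquiv _ _ v) := by
    rw [← Adjunction.homEquiv_naturality_right, huv, Adjunction.homEquiv_naturality_left]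
  obtain ⟨d, ⟨hd1, hd2⟩, hu⟩ := hO _ _ huv'
  refine ⟨(adj.homEquiv _ _).symm d, ⟨?_, ?_⟩, ?_⟩
  · have := congrArg (adj.homEquiv _ _).symm hd1
    rwa [Adjunction.homEquiv_naturality_left_symm, Equiv.symm_apply_apply] at this
  · have := congrArg (adj.homEquiv _ _).symm hd2
    rwa [Adjunction.homEquiv_naturality_right_symm, Equiv.symm_apply_apply] at this
  · rintro d' ⟨h1, h2⟩
    have hd' : adj.homEquiv _ _ d' = d := by
      refine hu _ ⟨?_, ?_⟩
      · rw [← Adjunction.homEquiv_naturality_left, h1]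
      · rw [← Adjunction.homEquiv_naturality_right, h2]
    rw [← hd', Equiv.symm_apply_apply]

/-- Transposing orthogonality along an adjunction, the other direction. -/
theorem orth_adj_right {D : Type u₂} [Category.{v₂} D] {F : C ⥤ D} {G : D ⥤ C}
    (adj : F ⊣ G) {A B : C} {X Y : D} (f : A ⟶ B) (g : X ⟶ Y)
    (hO : Orth (F.map f) g) : Orth f (G.map g) := by
  intro u v huv
  have huv' : ((adj.homEquiv _ _).symm u) ≫ g = F.map f ≫ ((adj.homEquiv _ _).symm v) := by
    rw [← Adjunction.homEquiv_naturality_right_symm, huv,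
      Adjunction.homEquiv_naturality_left_symm]
  obtain ⟨d, ⟨hd1, hd2⟩, hu⟩ := hO _ _ huv'
  refine ⟨adj.homEquiv _ _ d, ⟨?_, ?_⟩, ?_⟩
  · have := congrArg (adj.homEquiv _ _) hd1
    rwa [Adjunction.homEquiv_naturality_left, Equiv.apply_symm_apply] at this
  · have := congrArg (adj.homEquiv _ _) hd2
    rwa [Adjunction.homEquiv_naturality_right, Equiv.apply_symm_apply] at this
  · rintro d' ⟨h1, h2⟩
    have hd' : (adj.homEquiv _ _).symm d' = d := by
      refine hu _ ⟨?_, ?_⟩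
      · rw [← Adjunction.homEquiv_naturality_left_symm, h1]
      · rw [← Adjunction.homEquiv_naturality_right_symm, h2]
    rw [← hd', Equiv.apply_symm_apply]

end OrthLemmas

section Base

variable {C : Type u} [Category.{v} C] {E J M : MorphismProperty C}
variable (h : IsDFS E J M)
include h

theorem id_mem (X : C) : E (𝟙 X) ∧ J (𝟙 X) ∧ M (𝟙 X) := by
  obtain ⟨A, B, e, j, m, hE, hJ, hM, hfac⟩ := h.fac (𝟙 X)
  obtain ⟨st, hst, huniq⟩ := h.lift e j j m e m hE hJ hJ hM rfl
  have hfac' : ∀ {Z : C} (k : X ⟶ Z), e ≫ j ≫ m ≫ k = k := by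
    intro Z k
    rw [← Category.assoc, ← Category.assoc, Category.assoc e j m, hfac, Category.id_comp]
  have h2 := huniq (𝟙 A, 𝟙 B) ⟨by simp, by simp, by simp⟩
  have h3 := huniq (j ≫ m ≫ e, m ≫ e ≫ j) ⟨hfac' e, by simp, by
    show (m ≫ e ≫ j) ≫ m = m
    rw [Category.assoc, Category.assoc, hfac]
    simp⟩
  have h4 := h3.trans h2.symm
  have hA : j ≫ m ≫ e = 𝟙 A := congrArg Prod.fst h4
  have hB : m ≫ e ≫ j = 𝟙 B := congrArg Prod.snd h4
  have hie : IsIso e := ⟨j ≫ m, hfac, by rw [Category.assoc]; exact hA⟩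
  have him : IsIso m := ⟨e ≫ j, hB, by rw [Category.assoc]; exact hfac⟩
  have hijm : IsIso (j ≫ m) := ⟨e, by rw [Category.assoc]; exact hA, hfac⟩
  refine ⟨?_, ?_, ?_⟩
  · have := h.postcomp_iso_E e (j ≫ m) hijm hE
    rwa [hfac] at this
  · have := h.comp_iso_J e j m hie him hJ
    rwa [hfac] at this
  · have := h.precomp_iso_M (e ≫ j) m ⟨m, by rw [Category.assoc]; exact hfac, hB⟩ hM
    rwa [Category.assoc, hfac] at this

theorem E_id (X : C) : E (𝟙 X) := (id_mem h X).1
theorem J_id (X : C) : J (𝟙 X) := (id_mem h X).2.1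
theorem M_id (X : C) : M (𝟙 X) := (id_mem h X).2.2

theorem orth_E_JM {A B X Y Z : C} {e : A ⟶ B} {j : X ⟶ Y} {m : Y ⟶ Z}
    (he : E e) (hj : J j) (hm : M m) : Orth e (j ≫ m) := by
  intro u v huv
  obtain ⟨⟨s, t⟩, ⟨hs1, hs2, hs3⟩, huniq⟩ :=
    h.lift e (𝟙 B) j m u v he (J_id h B) hj hm (by rw [Category.id_comp]; exact huv.symm)
  refine ⟨s, ⟨hs1, ?_⟩, ?_⟩
  · rw [← Category.assoc, hs2, Category.id_comp, hs3]
  · rintro d ⟨h1, h2⟩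
    have := huniq (d, d ≫ j) ⟨h1, (Category.id_comp _).symm, by
      rw [Category.assoc]; exact h2⟩
    exact congrArg Prod.fst this

theorem orth_EJ_M {A B B'' X Z : C} {e : A ⟶ B} {j : B ⟶ B''} {m : X ⟶ Z}
    (he : E e) (hj : J j) (hm : M m) : Orth (e ≫ j) m := by
  intro u v huv
  obtain ⟨⟨s, t⟩, ⟨hs1, hs2, hs3⟩, huniq⟩ :=
    h.lift e j (𝟙 X) m u v he hj (J_id h X) hm
      (by rw [Category.id_comp, ← Category.assoc]; exact huv.symm)
  refine ⟨t, ⟨?_, hs3⟩, ?_⟩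
  · rw [Category.assoc, ← hs2, Category.comp_id, hs1]
  · rintro d ⟨h1, h2⟩
    have := huniq (j ≫ d, d) ⟨by rw [← Category.assoc]; exact h1, by simp, h2⟩
    exact congrArg Prod.snd this

theorem orth_E_compMJ {A B X Y : C} {f : A ⟶ B} {g : X ⟶ Y}
    (hf : E f) (hg : Comp M J g) : Orth f g := by
  obtain ⟨Z, j, m, hj, hm, rfl⟩ := hg
  exact orth_E_JM h hf hj hm

theorem orth_compJE_M {A B X Y : C} {f : A ⟶ B} {g : X ⟶ Y}
    (hf : Comp J E f) (hg : M g) : Orth f g := by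
  obtain ⟨Z, e, j, he, hj, rfl⟩ := hf
  exact orth_EJ_M h he hj hg

theorem E_of_orth {X Y : C} {f : X ⟶ Y}
    (hf : ∀ ⦃P Q : C⦄ (g : P ⟶ Q), Comp M J g → Orth f g) : E f := by
  obtain ⟨A, B, e, j, m, hE, hJ, hM, hfac⟩ := h.fac f
  obtain ⟨d, ⟨hd1, hd2⟩, _⟩ := hf (j ≫ m) ⟨B, j, m, hJ, hM, rfl⟩ e (𝟙 Y)
    (by rw [Category.comp_id]; exact hfac)
  obtain ⟨k, hk, hkuniq⟩ := orth_E_JM h hE hJ hM e (j ≫ m) rfl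
  have k1 : 𝟙 A = k := hkuniq _ ⟨Category.comp_id e, Category.id_comp _⟩
  have k2 : (j ≫ m) ≫ d = k := hkuniq _ ⟨by rw [← Category.assoc, hfac, hd1], by
    rw [Category.assoc, hd2, Category.comp_id]⟩
  have : IsIso (j ≫ m) := ⟨d, k2.trans k1.symm, hd2⟩
  have := h.postcomp_iso_E e (j ≫ m) this hE
  rwa [hfac] at this

theorem JE_of_orth {X Y : C} {f : X ⟶ Y}
    (hf : ∀ ⦃P Q : C⦄ (g : P ⟶ Q), M g → Orth f g) : Comp J E f := by
  obtain ⟨A, B, e, j, m, hE, hJ, hM, hfac⟩ := h.fac f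
  obtain ⟨d, ⟨hd1, hd2⟩, _⟩ := hf m hM (e ≫ j) (𝟙 Y)
    (by rw [Category.comp_id, Category.assoc]; exact hfac)
  obtain ⟨k, hk, hkuniq⟩ := orth_EJ_M h hE hJ hM (e ≫ j) m rfl
  have k1 : 𝟙 B = k := hkuniq _ ⟨Category.comp_id _, Category.id_comp _⟩
  have k2 : m ≫ d = k := hkuniq _ ⟨by
      rw [← Category.assoc, Category.assoc e j m, hfac, hd1], by
    rw [Category.assoc, hd2, Category.comp_id]⟩
  have him : IsIso m := ⟨d, k2.trans k1.symm, hd2⟩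
  refine ⟨A, e, j ≫ m, hE, ?_, hfac⟩
  have := h.comp_iso_J (𝟙 A) j m inferInstance him hJ
  rwa [Category.id_comp] at this

theorem M_of_orth {X Y : C} {g : X ⟶ Y}
    (hg : ∀ ⦃P Q : C⦄ (f : P ⟶ Q), Comp J E f → Orth f g) : M g := by
  obtain ⟨A, B, e, j, m, hE, hJ, hM, hfac⟩ := h.fac g
  obtain ⟨d, ⟨hd1, hd2⟩, _⟩ := hg (e ≫ j) ⟨A, e, j, hE, hJ, rfl⟩ (𝟙 X) m
    (by rw [Category.id_comp, Category.assoc]; exact hfac.symm)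
  obtain ⟨k, hk, hkuniq⟩ := orth_EJ_M h hE hJ hM (e ≫ j) m rfl
  have k1 : 𝟙 B = k := hkuniq _ ⟨Category.comp_id _, Category.id_comp _⟩
  have k2 : d ≫ e ≫ j = k := hkuniq _ ⟨by
      rw [← Category.assoc, hd1, Category.id_comp], by
    rw [Category.assoc, Category.assoc, hfac, hd2]⟩
  have : IsIso (e ≫ j) := ⟨d, hd1, k2.trans k1.symm⟩
  have := h.precomp_iso_M (e ≫ j) m this hM
  rwa [Category.assoc, hfac] at this

theorem MJ_of_orth {X Y : C} {g : X ⟶ Y}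
    (hg : ∀ ⦃P Q : C⦄ (f : P ⟶ Q), E f → Orth f g) : Comp M J g := by
  obtain ⟨A, B, e, j, m, hE, hJ, hM, hfac⟩ := h.fac g
  obtain ⟨d, ⟨hd1, hd2⟩, _⟩ := hg e hE (𝟙 X) (j ≫ m)
    (by rw [Category.id_comp]; exact hfac.symm)
  obtain ⟨k, hk, hkuniq⟩ := orth_E_JM h hE hJ hM e (j ≫ m) rfl
  have k1 : 𝟙 A = k := hkuniq _ ⟨Category.comp_id _, Category.id_comp _⟩
  have k2 : d ≫ e = k := hkuniq _ ⟨by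
      rw [← Category.assoc, hd1, Category.id_comp], by
    rw [Category.assoc, hfac, hd2]⟩
  have hie : IsIso e := ⟨d, hd1, k2.trans k1.symm⟩
  refine ⟨B, e ≫ j, m, ?_, hM, by rw [Category.assoc, hfac]⟩
  have := h.comp_iso_J e j (𝟙 B) hie inferInstance hJ
  rwa [Category.comp_id] at this

theorem MJ_conj {X' X Y Y' : C} {g : X ⟶ Y} (hg : Comp M J g)
    (i : X' ⟶ X) (i' : Y ⟶ Y') (hi : IsIso i) (hi' : IsIso i') :
    Comp M J (i ≫ g ≫ i') := by
  apply MJ_of_orth h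
  intro P Q f hf
  exact ((orth_E_compMJ h hf hg).postcomp i' hi').precomp i hi

theorem M_conj {X' X Y Y' : C} {g : X ⟶ Y} (hg : M g)
    (i : X' ⟶ X) (i' : Y ⟶ Y') (hi : IsIso i) (hi' : IsIso i') :
    M (i ≫ g ≫ i') := by
  apply M_of_orth h
  intro P Q f hf
  exact ((orth_compJE_M h hf hg).postcomp i' hi').precomp i hi

end Base

/-! ### Lifting a dfs to Eilenberg–Moore algebras -/

section Algebra

variable {C : Type u} [Category.{v} C] {E J M : MorphismProperty C} {T : Monad C}

/-- Transfer of orthogonality from the base category to algebras. -/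
theorem orth_alg {A B X Y : T.Algebra} {f : A ⟶ B} {g : X ⟶ Y}
    (h1 : Orth f.f g.f) (h2 : Orth (T.toFunctor.map f.f) g.f) : Orth f g := by
  intro u v huv
  have huv' : u.f ≫ g.f = f.f ≫ v.f := by
    have := congrArg Monad.Algebra.Hom.f huv
    simpa [Monad.Algebra.comp_f] using this
  obtain ⟨d, ⟨hd1, hd2⟩, hu⟩ := h1 u.f v.f huv'
  have hsq : (A.a ≫ u.f) ≫ g.f = T.toFunctor.map f.f ≫ (B.a ≫ v.f) := by
    rw [Category.assoc, huv', ← Category.assoc, ← f.h, Category.assoc]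
  obtain ⟨k, hk, hku⟩ := h2 (A.a ≫ u.f) (B.a ≫ v.f) hsq
  have c1 : B.a ≫ d = k := hku _ ⟨by
      rw [← Category.assoc, f.h, Category.assoc, hd1], by
    rw [Category.assoc, hd2]⟩
  have c2 : T.toFunctor.map d ≫ X.a = k := hku _ ⟨by
      rw [← Category.assoc, ← Functor.map_comp, hd1, u.h], by
    rw [Category.assoc, ← g.h, ← Category.assoc, ← Functor.map_comp, hd2, v.h]⟩
  have hdh : T.toFunctor.map d ≫ X.a = B.a ≫ d := c2.trans c1.symm
  refine ⟨⟨d, hdh⟩, ⟨?_, ?_⟩, ?_⟩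
  · exact Monad.Algebra.Hom.ext hd1
  · exact Monad.Algebra.Hom.ext hd2
  · rintro d' ⟨e1, e2⟩
    apply Monad.Algebra.Hom.ext
    refine hu _ ⟨?_, ?_⟩
    · have := congrArg Monad.Algebra.Hom.f e1
      simpa [Monad.Algebra.comp_f] using this
    · have := congrArg Monad.Algebra.Hom.f e2
      simpa [Monad.Algebra.comp_f] using this

/-- The right-induced dfs on the Eilenberg–Moore category. -/
theorem IsDFS.algebra (h : IsDFS E J M)
    (hTE : ∀ ⦃A B : C⦄ (f : A ⟶ B), E f → E (T.toFunctor.map f))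
    (hTJ : ∀ ⦃A B : C⦄ (f : A ⟶ B), J f → J (T.toFunctor.map f)) :
    IsDFS (algPre T E) (algPre T J) (algPre T M) := by
  have forget_iso : ∀ {X Y : T.Algebra} (i : X ⟶ Y), IsIso i → IsIso i.f := by
    intro X Y i hi
    exact (inferInstanceAs (IsIso ((Monad.forget T).map i)))
  constructor
  · intro A B B' e i hi he
    show E ((e ≫ i).f)
    rw [Monad.Algebra.comp_f]
    exact h.postcomp_iso_E e.f i.f (forget_iso i hi) he
  · intro A' A B B' i j i' hi hi' hj
    show J ((i ≫ j ≫ i').f)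
    rw [Monad.Algebra.comp_f, Monad.Algebra.comp_f]
    exact h.comp_iso_J i.f j.f i'.f (forget_iso i hi) (forget_iso i' hi') hj
  · intro A' A B i m hi hm
    show M ((i ≫ m).f)
    rw [Monad.Algebra.comp_f]
    exact h.precomp_iso_M i.f m.f (forget_iso i hi) hm
  · -- factorization of algebra maps
    intro A B f
    obtain ⟨X, Y, e, j, m, hE, hJ, hM, hfac⟩ := h.fac f.f
    have hTfac : T.toFunctor.map e ≫ T.toFunctor.map j ≫ T.toFunctor.map m
        = T.toFunctor.map f.f := by
      rw [← hfac]; simp only [Functor.map_comp, Category.assoc]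
    obtain ⟨⟨x, y⟩, ⟨hx1, hx2, hx3⟩, _⟩ :=
      h.lift (T.toFunctor.map e) (T.toFunctor.map j) j m (A.a ≫ e)
        (T.toFunctor.map m ≫ B.a) (hTE e hE) (hTJ j hJ) hJ hM (by
          calc T.toFunctor.map e ≫ T.toFunctor.map j ≫ T.toFunctor.map m ≫ B.a
              = (T.toFunctor.map e ≫ T.toFunctor.map j ≫ T.toFunctor.map m) ≫ B.a := by
                simp only [Functor.map_comp, Category.assoc]
            _ = T.toFunctor.map f.f ≫ B.a := by rw [hTfac]
            _ = A.a ≫ f.f := f.h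
            _ = (A.a ≫ e) ≫ j ≫ m := by rw [← hfac, Category.assoc]
            )
    -- unit laws
    obtain ⟨st₀, hst₀, hu₀⟩ := h.lift e j j m e m hE hJ hJ hM rfl
    have p1 := hu₀ (𝟙 X, 𝟙 Y) ⟨by simp, by simp, by simp⟩
    have p2 := hu₀ (T.η.app X ≫ x, T.η.app Y ≫ y) ⟨by
        calc e ≫ T.η.app X ≫ x = (e ≫ T.η.app X) ≫ x := by rw [Category.assoc]
          _ = (T.η.app A.A ≫ T.toFunctor.map e) ≫ x := by
              have := T.η.naturality e; simp at this; rw [this]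
          _ = T.η.app A.A ≫ A.a ≫ e := by rw [Category.assoc, hx1]
          _ = (T.η.app A.A ≫ A.a) ≫ e := by rw [Category.assoc]
          _ = e := by rw [A.unit]; simp, by
        calc (T.η.app X ≫ x) ≫ j = T.η.app X ≫ T.toFunctor.map j ≫ y := by
              rw [Category.assoc, hx2]
          _ = (T.η.app X ≫ T.toFunctor.map j) ≫ y := by rw [Category.assoc]
          _ = (j ≫ T.η.app Y) ≫ y := by
              have := T.η.naturality j; simp at this; rw [this]
          _ = j ≫ T.η.app Y ≫ y := by rw [Category.assoc], by
        calc (T.η.app Y ≫ y) ≫ m = T.η.app Y ≫ T.toFunctor.map m ≫ B.a := by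
              rw [Category.assoc, hx3]
          _ = (T.η.app Y ≫ T.toFunctor.map m) ≫ B.a := by rw [Category.assoc]
          _ = (m ≫ T.η.app B.A) ≫ B.a := by
              have := T.η.naturality m; simp at this; rw [this]
          _ = m := by rw [Category.assoc, B.unit]; simp⟩
    have punit := p2.trans p1.symm
    have hxu : T.η.app X ≫ x = 𝟙 X := congrArg Prod.fst punit
    have hyu : T.η.app Y ≫ y = 𝟙 Y := congrArg Prod.snd punit
    -- associativity laws
    obtain ⟨st₁, hst₁, hu₁⟩ :=
      h.lift (T.toFunctor.map (T.toFunctor.map e)) (T.toFunctor.map (T.toFunctor.map j)) j m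
        (T.toFunctor.map A.a ≫ A.a ≫ e)
        (T.toFunctor.map (T.toFunctor.map m) ≫ T.toFunctor.map B.a ≫ B.a)
        (hTE _ (hTE e hE)) (hTJ _ (hTJ j hJ)) hJ hM (by
          calc T.toFunctor.map (T.toFunctor.map e) ≫ T.toFunctor.map (T.toFunctor.map j) ≫
                T.toFunctor.map (T.toFunctor.map m) ≫ T.toFunctor.map B.a ≫ B.a
              = T.toFunctor.map (T.toFunctor.map e ≫ T.toFunctor.map j ≫ T.toFunctor.map m) ≫
                  T.toFunctor.map B.a ≫ B.a := by simp only [Functor.map_comp, Category.assoc]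
            _ = T.toFunctor.map (T.toFunctor.map f.f) ≫ T.toFunctor.map B.a ≫ B.a := by
                rw [hTfac]
            _ = T.toFunctor.map (T.toFunctor.map f.f ≫ B.a) ≫ B.a := by simp only [Functor.map_comp, Category.assoc]
            _ = T.toFunctor.map (A.a ≫ f.f) ≫ B.a := by rw [f.h]
            _ = T.toFunctor.map A.a ≫ T.toFunctor.map f.f ≫ B.a := by simp only [Functor.map_comp, Category.assoc]
            _ = T.toFunctor.map A.a ≫ A.a ≫ f.f := by rw [f.h]
            _ = (T.toFunctor.map A.a ≫ A.a ≫ e) ≫ j ≫ m := by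
                rw [← hfac]; simp only [Category.assoc])
    have q1 := hu₁ (T.μ.app X ≫ x, T.μ.app Y ≫ y) ⟨by
        calc T.toFunctor.map (T.toFunctor.map e) ≫ T.μ.app X ≫ x
            = (T.toFunctor.map (T.toFunctor.map e) ≫ T.μ.app X) ≫ x := by
              rw [Category.assoc]
          _ = (T.μ.app A.A ≫ T.toFunctor.map e) ≫ x := by
              have := T.μ.naturality e; simp at this; rw [this]
          _ = T.μ.app A.A ≫ A.a ≫ e := by rw [Category.assoc, hx1]
          _ = (T.μ.app A.A ≫ A.a) ≫ e := by rw [Category.assoc]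
          _ = (T.toFunctor.map A.a ≫ A.a) ≫ e := by rw [A.assoc]
          _ = T.toFunctor.map A.a ≫ A.a ≫ e := by rw [Category.assoc], by
        calc (T.μ.app X ≫ x) ≫ j = T.μ.app X ≫ T.toFunctor.map j ≫ y := by
              rw [Category.assoc, hx2]
          _ = (T.μ.app X ≫ T.toFunctor.map j) ≫ y := by rw [Category.assoc]
          _ = (T.toFunctor.map (T.toFunctor.map j) ≫ T.μ.app Y) ≫ y := by
              have := T.μ.naturality j; simp at this; rw [this]
          _ = T.toFunctor.map (T.toFunctor.map j) ≫ T.μ.app Y ≫ y := by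
              rw [Category.assoc], by
        calc (T.μ.app Y ≫ y) ≫ m = T.μ.app Y ≫ T.toFunctor.map m ≫ B.a := by
              rw [Category.assoc, hx3]
          _ = (T.μ.app Y ≫ T.toFunctor.map m) ≫ B.a := by rw [Category.assoc]
          _ = (T.toFunctor.map (T.toFunctor.map m) ≫ T.μ.app B.A) ≫ B.a := by
              have := T.μ.naturality m; simp at this; rw [this]
          _ = T.toFunctor.map (T.toFunctor.map m) ≫ T.μ.app B.A ≫ B.a := by
              rw [Category.assoc]
          _ = T.toFunctor.map (T.toFunctor.map m) ≫ T.toFunctor.map B.a ≫ B.a := by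
              rw [B.assoc]⟩
    have q2 := hu₁ (T.toFunctor.map x ≫ x, T.toFunctor.map y ≫ y) ⟨by
        calc T.toFunctor.map (T.toFunctor.map e) ≫ T.toFunctor.map x ≫ x
            = T.toFunctor.map (T.toFunctor.map e ≫ x) ≫ x := by simp only [Functor.map_comp, Category.assoc]
          _ = T.toFunctor.map (A.a ≫ e) ≫ x := by rw [hx1]
          _ = T.toFunctor.map A.a ≫ T.toFunctor.map e ≫ x := by simp only [Functor.map_comp, Category.assoc]
          _ = T.toFunctor.map A.a ≫ A.a ≫ e := by rw [hx1], by
        calc (T.toFunctor.map x ≫ x) ≫ j = T.toFunctor.map x ≫ x ≫ j := by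
              rw [Category.assoc]
          _ = T.toFunctor.map x ≫ T.toFunctor.map j ≫ y := by rw [hx2]
          _ = T.toFunctor.map (x ≫ j) ≫ y := by simp only [Functor.map_comp, Category.assoc]
          _ = T.toFunctor.map (T.toFunctor.map j ≫ y) ≫ y := by rw [hx2]
          _ = T.toFunctor.map (T.toFunctor.map j) ≫ T.toFunctor.map y ≫ y := by simp only [Functor.map_comp, Category.assoc], by
        calc (T.toFunctor.map y ≫ y) ≫ m = T.toFunctor.map y ≫ y ≫ m := by
              rw [Category.assoc]
          _ = T.toFunctor.map y ≫ T.toFunctor.map m ≫ B.a := by rw [hx3]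
          _ = T.toFunctor.map (y ≫ m) ≫ B.a := by simp only [Functor.map_comp, Category.assoc]
          _ = T.toFunctor.map (T.toFunctor.map m ≫ B.a) ≫ B.a := by rw [hx3]
          _ = T.toFunctor.map (T.toFunctor.map m) ≫ T.toFunctor.map B.a ≫ B.a := by simp only [Functor.map_comp, Category.assoc]⟩
    have passoc := q1.trans q2.symm
    have hxa : T.μ.app X ≫ x = T.toFunctor.map x ≫ x := congrArg Prod.fst passoc
    have hya : T.μ.app Y ≫ y = T.toFunctor.map y ≫ y := congrArg Prod.snd passoc
    refine ⟨⟨X, x, hxu, hxa⟩, ⟨Y, y, hyu, hya⟩,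
      ⟨e, hx1⟩, ⟨j, by rw [hx2]⟩, ⟨m, hx3.symm⟩, hE, hJ, hM, ?_⟩
    apply Monad.Algebra.Hom.ext
    simpa [Monad.Algebra.comp_f] using hfac
  · -- lifting for algebra maps
    intro A B B'' D D' F' e j j' m u v he hj hj' hm hcond
    have hcondf : e.f ≫ j.f ≫ v.f = u.f ≫ j'.f ≫ m.f := by
      have := congrArg Monad.Algebra.Hom.f hcond
      simpa [Monad.Algebra.comp_f] using this
    obtain ⟨⟨s, t⟩, ⟨hs1, hs2, hs3⟩, hu⟩ :=
      h.lift e.f j.f j'.f m.f u.f v.f he hj hj' hm hcondf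
    obtain ⟨st₂, hst₂, hu₂⟩ :=
      h.lift (T.toFunctor.map e.f) (T.toFunctor.map j.f) j'.f m.f
        (A.a ≫ u.f) (T.toFunctor.map v.f ≫ F'.a) (hTE _ he) (hTJ _ hj) hj' hm (by
          calc T.toFunctor.map e.f ≫ T.toFunctor.map j.f ≫ T.toFunctor.map v.f ≫ F'.a
              = T.toFunctor.map (e.f ≫ j.f ≫ v.f) ≫ F'.a := by simp only [Functor.map_comp, Category.assoc]
            _ = T.toFunctor.map (u.f ≫ j'.f ≫ m.f) ≫ F'.a := by rw [hcondf]
            _ = T.toFunctor.map u.f ≫ T.toFunctor.map j'.f ≫ T.toFunctor.map m.f ≫ F'.a := by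
                simp only [Functor.map_comp, Category.assoc]
            _ = T.toFunctor.map u.f ≫ T.toFunctor.map j'.f ≫ D'.a ≫ m.f := by rw [m.h]
            _ = T.toFunctor.map u.f ≫ (T.toFunctor.map j'.f ≫ D'.a) ≫ m.f := by
                rw [Category.assoc]
            _ = T.toFunctor.map u.f ≫ (D.a ≫ j'.f) ≫ m.f := by rw [j'.h]
            _ = (T.toFunctor.map u.f ≫ D.a) ≫ j'.f ≫ m.f := by simp only [Functor.map_comp, Category.assoc]
            _ = (A.a ≫ u.f) ≫ j'.f ≫ m.f := by rw [u.h])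
    have r1 := hu₂ (B.a ≫ s, B''.a ≫ t) ⟨by
        calc T.toFunctor.map e.f ≫ B.a ≫ s = (T.toFunctor.map e.f ≫ B.a) ≫ s := by
              rw [Category.assoc]
          _ = (A.a ≫ e.f) ≫ s := by rw [e.h]
          _ = A.a ≫ e.f ≫ s := by rw [Category.assoc]
          _ = A.a ≫ u.f := by rw [hs1], by
        calc (B.a ≫ s) ≫ j'.f = B.a ≫ s ≫ j'.f := by rw [Category.assoc]
          _ = B.a ≫ j.f ≫ t := by rw [hs2]
          _ = (B.a ≫ j.f) ≫ t := by rw [Category.assoc]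
          _ = (T.toFunctor.map j.f ≫ B''.a) ≫ t := by rw [j.h]
          _ = T.toFunctor.map j.f ≫ B''.a ≫ t := by rw [Category.assoc], by
        calc (B''.a ≫ t) ≫ m.f = B''.a ≫ t ≫ m.f := by rw [Category.assoc]
          _ = B''.a ≫ v.f := by rw [hs3]
          _ = T.toFunctor.map v.f ≫ F'.a := by rw [v.h]⟩
    have r2 := hu₂ (T.toFunctor.map s ≫ D.a, T.toFunctor.map t ≫ D'.a) ⟨by
        calc T.toFunctor.map e.f ≫ T.toFunctor.map s ≫ D.a
            = T.toFunctor.map (e.f ≫ s) ≫ D.a := by simp only [Functor.map_comp, Category.assoc]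
          _ = T.toFunctor.map u.f ≫ D.a := by rw [hs1]
          _ = A.a ≫ u.f := u.h, by
        calc (T.toFunctor.map s ≫ D.a) ≫ j'.f = T.toFunctor.map s ≫ D.a ≫ j'.f := by
              rw [Category.assoc]
          _ = T.toFunctor.map s ≫ T.toFunctor.map j'.f ≫ D'.a := by rw [← j'.h]
          _ = T.toFunctor.map (s ≫ j'.f) ≫ D'.a := by simp only [Functor.map_comp, Category.assoc]
          _ = T.toFunctor.map (j.f ≫ t) ≫ D'.a := by rw [hs2]
          _ = T.toFunctor.map j.f ≫ T.toFunctor.map t ≫ D'.a := by simp only [Functor.map_comp, Category.assoc], by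
        calc (T.toFunctor.map t ≫ D'.a) ≫ m.f = T.toFunctor.map t ≫ D'.a ≫ m.f := by
              rw [Category.assoc]
          _ = T.toFunctor.map t ≫ T.toFunctor.map m.f ≫ F'.a := by rw [← m.h]
          _ = T.toFunctor.map (t ≫ m.f) ≫ F'.a := by simp only [Functor.map_comp, Category.assoc]
          _ = T.toFunctor.map v.f ≫ F'.a := by rw [hs3]⟩
    have r3 := r2.trans r1.symm
    have hsh : T.toFunctor.map s ≫ D.a = B.a ≫ s := congrArg Prod.fst r3
    have hth : T.toFunctor.map t ≫ D'.a = B''.a ≫ t := congrArg Prod.snd r3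
    refine ⟨(⟨s, hsh⟩, ⟨t, hth⟩), ⟨?_, ?_, ?_⟩, ?_⟩
    · exact Monad.Algebra.Hom.ext hs1
    · exact Monad.Algebra.Hom.ext hs2
    · exact Monad.Algebra.Hom.ext hs3
    · rintro ⟨s', t'⟩ ⟨e1, e2, e3⟩
      have := hu (s'.f, t'.f) ⟨by
          have := congrArg Monad.Algebra.Hom.f e1
          simpa [Monad.Algebra.comp_f] using this, by
        have := congrArg Monad.Algebra.Hom.f e2
        simpa [Monad.Algebra.comp_f] using this, by
        have := congrArg Monad.Algebra.Hom.f e3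
        simpa [Monad.Algebra.comp_f] using this⟩
      have hfst : s'.f = s := congrArg Prod.fst this
      have hsnd : t'.f = t := congrArg Prod.snd this
      exact Prod.ext (Monad.Algebra.Hom.ext hfst) (Monad.Algebra.Hom.ext hsnd)

theorem algPre_comp {P' J' : MorphismProperty C} {X Y : T.Algebra} {g : X ⟶ Y}
    (hg : Comp (algPre T P') (algPre T J') g) : Comp P' J' g.f := by
  obtain ⟨Z, a, b, ha, hb, hab⟩ := hg
  exact ⟨Z.A, a.f, b.f, ha, hb, by rw [← hab]; simp [Monad.Algebra.comp_f]⟩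

end Algebra

end DFS


/-- Given dfs's on bicomplete categories `C`, `D`, monads `T`, `H`
preserving small colimits, trivial cofibrations and bifibrant morphisms, a Quillen
adjunction `L ⊣ R` and a functor `Q : D^H ⥤ C^T` commuting with the forgetful
functors (`V^H ⋙ R = Q ⋙ V^T`), the functor `Q` admits a left adjoint `P` and
`P ⊣ Q` is a Quillen adjunction for the right-induced dfs's. -/
theorem statement7 {C : Type u} [Category.{v} C] {D : Type u₂} [Category.{v₂} D]
    [HasLimits C] [HasColimits C] [HasLimits D] [HasColimits D]
    (EC JC MC : MorphismProperty C) (hC : DFS.IsDFS EC JC MC)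
    (ED JD MD : MorphismProperty D) (hD : DFS.IsDFS ED JD MD)
    (T : Monad C) (H : Monad D)
    [PreservesColimits T.toFunctor] [PreservesColimits H.toFunctor]
    (hTE : ∀ ⦃A B : C⦄ (f : A ⟶ B), EC f → EC (T.toFunctor.map f))
    (hTJ : ∀ ⦃A B : C⦄ (f : A ⟶ B), JC f → JC (T.toFunctor.map f))
    (hHE : ∀ ⦃A B : D⦄ (f : A ⟶ B), ED f → ED (H.toFunctor.map f))
    (hHJ : ∀ ⦃A B : D⦄ (f : A ⟶ B), JD f → JD (H.toFunctor.map f))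
    (L : C ⥤ D) (R : D ⥤ C) (adj : L ⊣ R)
    (hQuillen : DFS.LeftQuillen EC JC ED JD L)
    (Q : H.Algebra ⥤ T.Algebra) (hcomm : H.forget ⋙ R = Q ⋙ T.forget) :
    ∃ P : T.Algebra ⥤ H.Algebra, Nonempty (P ⊣ Q) ∧
      DFS.LeftQuillen (DFS.algPre T EC) (DFS.algPre T JC)
        (DFS.algPre H ED) (DFS.algPre H JD) P := by
  classical
  -- Existence of the left adjoint, via the adjoint lifting theorem.
  haveI : (Monad.forget H).IsRightAdjoint := ⟨_, ⟨H.adj⟩⟩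
  haveI : R.IsRightAdjoint := ⟨_, ⟨adj⟩⟩
  haveI : PreservesColimitsOfSize.{0, 0} H.toFunctor :=
    preservesColimitsOfSize_shrink H.toFunctor
  haveI : HasColimitsOfShape WalkingParallelPair H.Algebra :=
    hasColimitsOfShape_of_hasColimitsOfShape_createsColimitsOfShape (Monad.forget H)
  haveI : Q.IsRightAdjoint :=
    isRightAdjoint_square_lift_monadic Q (Monad.forget T) (Monad.forget H) R (eqToIso hcomm)
  have padj : Q.leftAdjoint ⊣ Q := Adjunction.ofIsRightAdjoint Q
  -- The right-induced dfs's on the algebra categories.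
  have hCalg : DFS.IsDFS (DFS.algPre T EC) (DFS.algPre T JC) (DFS.algPre T MC) :=
    hC.algebra hTE hTJ
  have hDalg : DFS.IsDFS (DFS.algPre H ED) (DFS.algPre H JD) (DFS.algPre H MD) :=
    hD.algebra hHE hHJ
  -- The right adjoint `R` preserves the right classes.
  have RpresMJ : ∀ {X Y : D} (g : X ⟶ Y), DFS.Comp MD JD g → DFS.Comp MC JC (R.map g) := by
    intro X Y g hg
    apply DFS.MJ_of_orth hC
    intro P' Q' f hf
    exact DFS.orth_adj_right adj f g (DFS.orth_E_compMJ hD (hQuillen.1 f hf) hg)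
  have RpresM : ∀ {X Y : D} (g : X ⟶ Y), MD g → MC (R.map g) := by
    intro X Y g hg
    apply DFS.M_of_orth hC
    intro P' Q' f hf
    exact DFS.orth_adj_right adj f g (DFS.orth_compJE_M hD (hQuillen.2 f hf) hg)
  -- Hence so does `Q`, on underlying morphisms.
  have QmapMJ : ∀ {X Y : H.Algebra} (g : X ⟶ Y), DFS.Comp MD JD g.f →
      DFS.Comp MC JC ((Q.map g).f) := by
    intro X Y g hg
    show DFS.Comp MC JC ((Q ⋙ Monad.forget T).map g)
    rw [Functor.congr_hom hcomm.symm g]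
    exact DFS.MJ_conj hC (RpresMJ _ hg) _ _ (Iso.isIso_hom (eqToIso (Functor.congr_obj hcomm.symm X))) (Iso.isIso_hom (eqToIso (Functor.congr_obj hcomm Y)))
  have QmapM : ∀ {X Y : H.Algebra} (g : X ⟶ Y), MD g.f → MC ((Q.map g).f) := by
    intro X Y g hg
    show MC ((Q ⋙ Monad.forget T).map g)
    rw [Functor.congr_hom hcomm.symm g]
    exact DFS.M_conj hC (RpresM _ hg) _ _ (Iso.isIso_hom (eqToIso (Functor.congr_obj hcomm.symm X))) (Iso.isIso_hom (eqToIso (Functor.congr_obj hcomm Y)))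
  refine ⟨Q.leftAdjoint, ⟨padj⟩, ?_, ?_⟩
  · -- `P` preserves trivial cofibrations
    intro A B f hf
    apply DFS.E_of_orth hDalg
    intro P' Q' g hg
    apply DFS.orth_adj_left padj
    have hg' : DFS.Comp MC JC ((Q.map g).f) := QmapMJ g (DFS.algPre_comp hg)
    exact DFS.orth_alg (DFS.orth_E_compMJ hC hf hg')
      (DFS.orth_E_compMJ hC (hTE _ hf) hg')
  · -- `P` preserves bifibrant morphisms composed with trivial cofibrations
    intro A B f hf
    obtain ⟨Z, e₀, j₀, he₀, hj₀, hfe⟩ := hf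
    have hff : e₀.f ≫ j₀.f = f.f := by rw [← hfe]; rfl
    apply DFS.JE_of_orth hDalg
    intro P' Q' m hm
    apply DFS.orth_adj_left padj
    have hMQ : MC ((Q.map m).f) := QmapM m hm
    refine DFS.orth_alg ?_ ?_
    · have := DFS.orth_EJ_M hC he₀ hj₀ hMQ
      rwa [hff] at this
    · have := DFS.orth_EJ_M hC (hTE _ he₀) (hTJ _ hj₀) hMQ
      rwa [← Functor.map_comp, hff] at this
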